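/- Asymptotics of the mean sojourn time for α > 1: there exist constants 0 < c₁ ≤ c₂ such that for all sufficiently large t, c₁ t^{(α-1)/α} ≤ ∫_0^t J(t') dt' ≤ c₂ t^{(α-1)/α}, where J(t) = (1-p^{-1}) Σ_{n=0}^∞ p^{-n} e^{-p^{-αn} t}. -/

import Mathlib

open Real MeasureTheory intervalIntegral

/-- Asymptotics of the mean sojourn time for `α > 1`: there are constants
  `0 < c₁ ≤ c₂` with `c₁ t^{(α-1)/α} ≤ ∫_0^t J ≤ c₂ t^{(α-1)/α}` for large `t`. -/
theorem stmt12 (p : ℕ) (hp : p.Prime) (α : ℝ) (hα : 1 < α)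
    (J : ℝ → ℝ)
    (hJ : ∀ t : ℝ, J t = (1 - (p : ℝ)⁻¹) *
      ∑' n : ℕ, (p : ℝ) ^ (-(n : ℝ)) * Real.exp (-(p : ℝ) ^ (-(α * (n : ℝ))) * t)) :
    ∃ c₁ c₂ : ℝ, 0 < c₁ ∧ c₁ ≤ c₂ ∧ ∃ T : ℝ, ∀ t : ℝ, T ≤ t →
      c₁ * t ^ ((α - 1) / α) ≤ (∫ t' in (0 : ℝ)..t, J t') ∧
      (∫ t' in (0 : ℝ)..t, J t') ≤ c₂ * t ^ ((α - 1) / α) := by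
  classical
  set P : ℝ := (p : ℝ) with hPdef
  have hP1 : (1:ℝ) < P := by rw [hPdef]; exact_mod_cast hp.one_lt
  have hP0 : (0:ℝ) < P := lt_trans one_pos hP1
  have hα0 : (0:ℝ) < α := lt_trans one_pos hα
  have hα1' : (0:ℝ) < α - 1 := sub_pos.mpr hα
  set a : ℝ := P⁻¹ with hadef
  have ha0 : 0 < a := inv_pos.mpr hP0
  have haP : a * P = 1 := inv_mul_cancel₀ hP0.ne'
  have ha1 : a < 1 := by nlinarith
  set q : ℝ := P ^ (-α) with hqdef
  have hq0 : 0 < q := Real.rpow_pos_of_pos hP0 _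
  -- rewrite J in terms of `a` and `q`
  have hpow1 : ∀ n : ℕ, P ^ (-(n:ℝ)) = a ^ n := by
    intro n
    rw [Real.rpow_neg hP0.le, Real.rpow_natCast, hadef, inv_pow]
  have hpow2 : ∀ n : ℕ, P ^ (-(α*(n:ℝ))) = q ^ n := by
    intro n
    rw [hqdef, ← Real.rpow_natCast (P ^ (-α)) n, ← Real.rpow_mul hP0.le, neg_mul]
  have hJ' : ∀ t : ℝ, J t = (1 - a) * ∑' n : ℕ, a ^ n * Real.exp (-(q ^ n * t)) := by
    intro t
    rw [hJ t]
    congr 1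
    apply tsum_congr
    intro n
    rw [hpow1 n, hpow2 n, neg_mul]
  -- summability
  have hsum : ∀ t : ℝ, 0 ≤ t → Summable (fun n : ℕ => a ^ n * Real.exp (-(q ^ n * t))) := by
    intro t ht
    apply Summable.of_nonneg_of_le (fun n => by positivity)
      (fun n => ?_) (summable_geometric_of_lt_one ha0.le ha1)
    have : Real.exp (-(q ^ n * t)) ≤ 1 := by
      rw [Real.exp_le_one_iff]
      have : 0 ≤ q ^ n * t := by positivity
      linarith
    calc a ^ n * Real.exp (-(q ^ n * t)) ≤ a ^ n * 1 :=
          mul_le_mul_of_nonneg_left this (by positivity)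
      _ = a ^ n := mul_one _
  -- J nonneg and ≤ 1
  have hJnn : ∀ u : ℝ, 0 ≤ u → 0 ≤ J u := by
    intro u hu
    rw [hJ' u]
    apply mul_nonneg (by linarith)
    exact tsum_nonneg (fun n => by positivity)
  have hJle1 : ∀ u : ℝ, 0 ≤ u → J u ≤ 1 := by
    intro u hu
    rw [hJ' u]
    have h1 : (∑' n : ℕ, a ^ n * Real.exp (-(q ^ n * u))) ≤ ∑' n : ℕ, a ^ n := by
      apply Summable.tsum_le_tsum _ (hsum u hu) (summable_geometric_of_lt_one ha0.le ha1)
      intro n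
      have he : Real.exp (-(q ^ n * u)) ≤ 1 := by
        rw [Real.exp_le_one_iff]
        have : 0 ≤ q ^ n * u := by positivity
        linarith
      calc a ^ n * Real.exp (-(q ^ n * u)) ≤ a ^ n * 1 :=
            mul_le_mul_of_nonneg_left he (by positivity)
        _ = a ^ n := mul_one _
    calc (1 - a) * (∑' n : ℕ, a ^ n * Real.exp (-(q ^ n * u)))
        ≤ (1 - a) * ∑' n : ℕ, a ^ n :=
          mul_le_mul_of_nonneg_left h1 (by linarith)
      _ = (1 - a) * (1 - a)⁻¹ := by rw [tsum_geometric_of_lt_one ha0.le ha1]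
      _ = 1 := mul_inv_cancel₀ (by linarith)
  -- J antitone on [0, ∞)
  have hAnti : AntitoneOn J (Set.Ici (0:ℝ)) := by
    intro s hs u hu hsu
    rw [hJ' s, hJ' u]
    apply mul_le_mul_of_nonneg_left _ (by linarith : (0:ℝ) ≤ 1 - a)
    apply Summable.tsum_le_tsum _ (hsum u hu) (hsum s hs)
    intro n
    apply mul_le_mul_of_nonneg_left _ (by positivity)
    apply Real.exp_le_exp.mpr
    have : q ^ n * s ≤ q ^ n * u := mul_le_mul_of_nonneg_left hsu (by positivity)
    linarith
  -- integrability of J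
  have hInt : ∀ u v : ℝ, 0 ≤ u → u ≤ v → IntervalIntegrable J volume u v := by
    intro u v hu huv
    apply AntitoneOn.intervalIntegrable
    apply hAnti.mono
    rw [Set.uIcc_of_le huv]
    exact fun x hx => le_trans hu hx.1
  -- selection of N
  have hQ1 : 1 < P ^ α := by
    have h : P ^ (0:ℝ) < P ^ α := by
      rw [Real.rpow_lt_rpow_left_iff hP1]; exact hα0
    simpa using h
  have hsel : ∀ t : ℝ, 1 ≤ t → ∃ N : ℕ, t ≤ (P ^ α) ^ N ∧ (P:ℝ) ^ N ≤ P * t ^ (1/α) := by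
    intro t ht
    have hex : ∃ n : ℕ, t ≤ (P ^ α) ^ n := by
      obtain ⟨n, hn⟩ := pow_unbounded_of_one_lt t hQ1
      exact ⟨n, hn.le⟩
    set N := Nat.find hex with hNdef
    refine ⟨N, Nat.find_spec hex, ?_⟩
    rcases Nat.eq_zero_or_pos N with h0 | hpos
    · rw [h0, pow_zero]
      have h1 : (1:ℝ) ≤ t ^ (1/α) := Real.one_le_rpow ht (by positivity)
      nlinarith
    · have hmin : ¬ t ≤ (P ^ α) ^ (N-1) := Nat.find_min hex (Nat.pred_lt hpos.ne')
      push_neg at hmin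
      have h2 : ((P ^ α) ^ (N-1) : ℝ) ^ (1/α) ≤ t ^ (1/α) :=
        Real.rpow_le_rpow (by positivity) hmin.le (by positivity)
      have h3 : ((P ^ α) ^ (N-1) : ℝ) ^ (1/α) = P ^ (N-1) := by
        rw [← Real.rpow_natCast (P ^ α) (N-1), ← Real.rpow_mul hP0.le,
          ← Real.rpow_mul hP0.le,
          show α * ((N-1 : ℕ):ℝ) * (1/α) = ((N-1:ℕ):ℝ) by field_simp,
          Real.rpow_natCast]
      rw [h3] at h2
      have hN1 : N - 1 + 1 = N := Nat.succ_pred_eq_of_pos hpos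
      calc (P:ℝ) ^ N = P ^ (N-1+1) := by rw [hN1]
        _ = P ^ (N-1) * P := pow_succ _ _
        _ ≤ t ^ (1/α) * P := mul_le_mul_of_nonneg_right h2 hP0.le
        _ = P * t ^ (1/α) := mul_comm _ _
  -- the ratio r = a / q = P^(α-1)
  set r : ℝ := P ^ (α - 1) with hrdef
  have hr1 : 1 < r := by
    have h : P ^ (0:ℝ) < P ^ (α-1) := by
      rw [Real.rpow_lt_rpow_left_iff hP1]; exact hα1'
    simpa using h
  have haq : a * q⁻¹ = r := by
    rw [hadef, hqdef, hrdef, Real.rpow_neg hP0.le, inv_inv,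
      show α - 1 = -1 + α by ring, Real.rpow_add hP0,
      Real.rpow_neg_one]
  have hqinv : q⁻¹ = P ^ α := by
    rw [hqdef, Real.rpow_neg hP0.le, inv_inv]
  -- constants
  set c0 : ℝ := (1 - a) * (a * Real.exp (-1)) with hc0def
  set C0 : ℝ := (1 - a) * (r / (r - 1) + (1 - a)⁻¹) with hC0def
  have hc00 : 0 < c0 := by
    apply mul_pos (by linarith)
    positivity
  have hC00 : 0 ≤ C0 := by
    apply mul_nonneg (by linarith)
    have h1 : 0 ≤ r / (r - 1) := div_nonneg (by linarith) (by linarith)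
    have h2 : 0 ≤ (1 - a)⁻¹ := by
      apply inv_nonneg.mpr; linarith
    linarith
  -- pointwise lower bound: c0 * t^(-(1/α)) ≤ J t for t ≥ 1
  have hL : ∀ t : ℝ, 1 ≤ t → c0 * t ^ (-(1/α)) ≤ J t := by
    intro t ht
    have ht0 : (0:ℝ) < t := lt_of_lt_of_le one_pos ht
    obtain ⟨N, hN1, hN2⟩ := hsel t ht
    have hta : (0:ℝ) < t ^ (1/α) := Real.rpow_pos_of_pos ht0 _
    have hPN : (0:ℝ) < (P:ℝ) ^ N := pow_pos hP0 N
    -- a^N ≥ a * t^(-(1/α))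
    have h1 : a * t ^ (-(1/α)) ≤ a ^ N := by
      have hinv : (P * t ^ (1/α))⁻¹ ≤ ((P:ℝ) ^ N)⁻¹ := by
        apply inv_anti₀ hPN hN2
      rw [hadef, inv_pow] at *
      calc P⁻¹ * t ^ (-(1/α)) = (P * t ^ (1/α))⁻¹ := by
            rw [Real.rpow_neg ht0.le, mul_inv]
        _ ≤ ((P:ℝ) ^ N)⁻¹ := hinv
    -- q^N * t ≤ 1
    have h2 : q ^ N * t ≤ 1 := by
      have : q ^ N * t ≤ q ^ N * (P ^ α) ^ N :=
        mul_le_mul_of_nonneg_left hN1 (by positivity)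
      calc q ^ N * t ≤ q ^ N * (P ^ α) ^ N := this
        _ = (q * (P ^ α)) ^ N := (mul_pow _ _ _).symm
        _ = 1 := by
            rw [← hqinv, mul_inv_cancel₀ hq0.ne', one_pow]
    have h3 : Real.exp (-1) ≤ Real.exp (-(q ^ N * t)) := by
      apply Real.exp_le_exp.mpr; linarith
    have h4 : a * t ^ (-(1/α)) * Real.exp (-1) ≤ a ^ N * Real.exp (-(q ^ N * t)) := by
      apply mul_le_mul h1 h3 (by positivity)
      positivity
    have h5 : a ^ N * Real.exp (-(q ^ N * t)) ≤
        ∑' n : ℕ, a ^ n * Real.exp (-(q ^ n * t)) :=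
      Summable.le_tsum (hsum t ht0.le) N (fun j _ => by positivity)
    rw [hJ' t]
    calc c0 * t ^ (-(1/α)) = (1 - a) * (a * t ^ (-(1/α)) * Real.exp (-1)) := by
          rw [hc0def]; ring
      _ ≤ (1 - a) * (a ^ N * Real.exp (-(q ^ N * t))) :=
          mul_le_mul_of_nonneg_left h4 (by linarith)
      _ ≤ (1 - a) * ∑' n : ℕ, a ^ n * Real.exp (-(q ^ n * t)) :=
          mul_le_mul_of_nonneg_left h5 (by linarith)
  -- pointwise upper bound: J t ≤ C0 * t^(-(1/α)) for t ≥ 1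
  have hU : ∀ t : ℝ, 1 ≤ t → J t ≤ C0 * t ^ (-(1/α)) := by
    intro t ht
    have ht0 : (0:ℝ) < t := lt_of_lt_of_le one_pos ht
    obtain ⟨N, hN1, hN2⟩ := hsel t ht
    have hta : (0:ℝ) < t ^ (1/α) := Real.rpow_pos_of_pos ht0 _
    have hPN : (0:ℝ) < (P:ℝ) ^ N := pow_pos hP0 N
    have hs := hsum t ht0.le
    set f : ℕ → ℝ := fun n => a ^ n * Real.exp (-(q ^ n * t)) with hfdef
    have hsplit : (∑ n ∈ Finset.range N, f n) + (∑' n : ℕ, f (n + N)) = ∑' n : ℕ, f n :=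
      Summable.sum_add_tsum_nat_add N hs
    -- (i) : t^(1/α) ≤ P^N
    have hi : t ^ (1/α) ≤ (P:ℝ) ^ N := by
      have h2 : t ^ (1/α) ≤ ((P ^ α) ^ N : ℝ) ^ (1/α) :=
        Real.rpow_le_rpow ht0.le hN1 (by positivity)
      have h3 : ((P ^ α) ^ N : ℝ) ^ (1/α) = P ^ N := by
        rw [← Real.rpow_natCast (P ^ α) N, ← Real.rpow_mul hP0.le,
          ← Real.rpow_mul hP0.le,
          show α * (N:ℝ) * (1/α) = (N:ℝ) by field_simp,
          Real.rpow_natCast]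
      rwa [h3] at h2
    -- tail bound
    have htail : (∑' n : ℕ, f (n + N)) ≤ (1 - a)⁻¹ * t ^ (-(1/α)) := by
      have hb : ∀ n : ℕ, f (n + N) ≤ a ^ n * a ^ N := by
        intro n
        have he : Real.exp (-(q ^ (n+N) * t)) ≤ 1 := by
          rw [Real.exp_le_one_iff]
          have : 0 ≤ q ^ (n+N) * t := by positivity
          linarith
        calc f (n + N) = a ^ (n+N) * Real.exp (-(q ^ (n+N) * t)) := rfl
          _ ≤ a ^ (n+N) * 1 := mul_le_mul_of_nonneg_left he (by positivity)
          _ = a ^ n * a ^ N := by rw [mul_one, pow_add]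
      have hgs : Summable (fun n : ℕ => a ^ n * a ^ N) :=
        (summable_geometric_of_lt_one ha0.le ha1).mul_right _
      have h1 : (∑' n : ℕ, f (n + N)) ≤ ∑' n : ℕ, a ^ n * a ^ N :=
        Summable.tsum_le_tsum hb ((summable_nat_add_iff N).2 hs) hgs
      have h2 : (∑' n : ℕ, a ^ n * a ^ N) = (1 - a)⁻¹ * a ^ N := by
        rw [tsum_mul_right, tsum_geometric_of_lt_one ha0.le ha1]
      have h3 : a ^ N ≤ t ^ (-(1/α)) := by
        rw [hadef, inv_pow, Real.rpow_neg ht0.le]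
        exact inv_anti₀ hta hi
      calc (∑' n : ℕ, f (n + N)) ≤ (1 - a)⁻¹ * a ^ N := h1.trans_eq h2
        _ ≤ (1 - a)⁻¹ * t ^ (-(1/α)) := by
            apply mul_le_mul_of_nonneg_left h3
            apply inv_nonneg.mpr; linarith
    -- head bound
    have hrN : r ^ N ≤ r * t ^ ((α-1)/α) := by
      have h1 : ((P:ℝ) ^ N) ^ (α - 1) ≤ (P * t ^ (1/α)) ^ (α - 1) :=
        Real.rpow_le_rpow (by positivity) hN2 hα1'.le
      have h2 : ((P:ℝ) ^ N) ^ (α - 1) = r ^ N := by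
        rw [← Real.rpow_natCast P N, ← Real.rpow_mul hP0.le, hrdef,
          ← Real.rpow_natCast (P ^ (α-1)) N, ← Real.rpow_mul hP0.le]
        ring_nf
      have h3 : (P * t ^ (1/α)) ^ (α - 1) = r * t ^ ((α-1)/α) := by
        rw [Real.mul_rpow hP0.le hta.le, ← Real.rpow_mul ht0.le, hrdef,
          show 1/α * (α - 1) = (α-1)/α by field_simp]
      rw [h2, h3] at h1
      exact h1
    have hhead : (∑ n ∈ Finset.range N, f n) ≤ (r / (r - 1)) * t ^ (-(1/α)) := by
      have hterm : ∀ n ∈ Finset.range N, f n ≤ r ^ n * t⁻¹ := by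
        intro n _
        have hx : 0 < q ^ n * t := by positivity
        have hexp : Real.exp (-(q ^ n * t)) ≤ (q ^ n * t)⁻¹ := by
          rw [Real.exp_neg]
          apply inv_anti₀ hx
          linarith [Real.add_one_le_exp (q ^ n * t)]
        calc f n = a ^ n * Real.exp (-(q ^ n * t)) := rfl
          _ ≤ a ^ n * (q ^ n * t)⁻¹ :=
              mul_le_mul_of_nonneg_left hexp (by positivity)
          _ = (a * q⁻¹) ^ n * t⁻¹ := by
              rw [mul_inv, mul_pow, inv_pow]; ring
          _ = r ^ n * t⁻¹ := by rw [haq]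
      have h1 : (∑ n ∈ Finset.range N, f n) ≤ ∑ n ∈ Finset.range N, r ^ n * t⁻¹ :=
        Finset.sum_le_sum hterm
      have h2 : (∑ n ∈ Finset.range N, r ^ n * t⁻¹)
          = ((r ^ N - 1) / (r - 1)) * t⁻¹ := by
        rw [← Finset.sum_mul, geom_sum_eq hr1.ne' N]
      have h3 : ((r ^ N - 1) / (r - 1)) * t⁻¹ ≤ ((r * t ^ ((α-1)/α)) / (r - 1)) * t⁻¹ := by
        apply mul_le_mul_of_nonneg_right _ (by positivity)
        apply div_le_div_of_nonneg_right _ (by linarith)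
        linarith [hrN]
      have h4 : ((r * t ^ ((α-1)/α)) / (r - 1)) * t⁻¹ = (r / (r - 1)) * t ^ (-(1/α)) := by
        have ht1 : t ^ ((α-1)/α) * t⁻¹ = t ^ (-(1/α)) := by
          rw [← Real.rpow_neg_one t, ← Real.rpow_add ht0,
            show (α-1)/α + (-1) = -(1/α) by field_simp; ring]
        rw [← ht1]; ring
      calc (∑ n ∈ Finset.range N, f n) ≤ ((r ^ N - 1) / (r - 1)) * t⁻¹ := h1.trans_eq h2
        _ ≤ ((r * t ^ ((α-1)/α)) / (r - 1)) * t⁻¹ := h3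
        _ = (r / (r - 1)) * t ^ (-(1/α)) := h4
    rw [hJ' t]
    calc (1 - a) * ∑' n : ℕ, a ^ n * Real.exp (-(q ^ n * t))
        = (1 - a) * ((∑ n ∈ Finset.range N, f n) + ∑' n : ℕ, f (n + N)) := by
          rw [hsplit]
      _ ≤ (1 - a) * ((r / (r - 1)) * t ^ (-(1/α)) + (1 - a)⁻¹ * t ^ (-(1/α))) := by
          apply mul_le_mul_of_nonneg_left _ (by linarith)
          linarith [hhead, htail]
      _ = C0 * t ^ (-(1/α)) := by rw [hC0def]; ring
  -- integral machinery
  have hmα : -1 < -(1/α) := by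
    have : 1/α < 1 := by rw [div_lt_one hα0]; exact hα
    linarith
  set E : ℝ := (α - 1)/α with hEdef
  have hE0 : 0 < E := by positivity
  have hEeq : -(1/α) + 1 = E := by rw [hEdef]; field_simp; ring
  set m : ℝ := α / (α - 1) with hmdef
  have hm0 : 0 < m := by positivity
  have hintval : ∀ t : ℝ, 1 ≤ t → (∫ x in (1:ℝ)..t, x ^ (-(1/α))) = m * (t ^ E - 1) := by
    intro t ht
    rw [integral_rpow (Or.inl hmα), hEeq, Real.one_rpow]
    rw [hEdef, hmdef]
    field_simp
  have hIR : ∀ t : ℝ, IntervalIntegrable (fun x : ℝ => x ^ (-(1/α))) volume 1 t :=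
    fun t => intervalIntegral.intervalIntegrable_rpow' hmα
  -- choose constants
  clear_value P a q r c0 C0 E m
  refine ⟨c0 * m / 2, c0 * m / 2 + 1 + C0 * m, by positivity, by nlinarith, (2:ℝ) ^ m, ?_⟩
  intro t hTt
  have hT1 : (1:ℝ) ≤ (2:ℝ) ^ m := Real.one_le_rpow one_le_two hm0.le
  have ht1 : (1:ℝ) ≤ t := le_trans hT1 hTt
  have ht0 : (0:ℝ) < t := lt_of_lt_of_le one_pos ht1
  have htE2 : (2:ℝ) ≤ t ^ E := by
    have h1 : ((2:ℝ) ^ m) ^ E ≤ t ^ E :=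
      Real.rpow_le_rpow (by positivity) hTt hE0.le
    have h2 : ((2:ℝ) ^ m) ^ E = 2 := by
      rw [← Real.rpow_mul (by norm_num : (0:ℝ) ≤ 2),
        show m * E = 1 by rw [hmdef, hEdef]; field_simp, Real.rpow_one]
    rwa [h2] at h1
  have htE1 : (1:ℝ) ≤ t ^ E := by linarith
  -- integrability pieces
  have hint01 : IntervalIntegrable J volume 0 1 := hInt 0 1 le_rfl zero_le_one
  have hint1t : IntervalIntegrable J volume 1 t := hInt 1 t zero_le_one ht1
  have hFsplit : (∫ t' in (0:ℝ)..t, J t') = (∫ t' in (0:ℝ)..1, J t') + ∫ t' in (1:ℝ)..t, J t' :=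
    (intervalIntegral.integral_add_adjacent_intervals hint01 hint1t).symm
  -- bounds on [0,1]
  have h01nn : 0 ≤ ∫ t' in (0:ℝ)..1, J t' :=
    intervalIntegral.integral_nonneg zero_le_one (fun u hu => hJnn u hu.1)
  have h01le : (∫ t' in (0:ℝ)..1, J t') ≤ 1 := by
    have := intervalIntegral.integral_mono_on zero_le_one hint01
      (intervalIntegrable_const (c := (1:ℝ))) (fun u hu => hJle1 u hu.1)
    simpa using this
  -- bounds on [1, t]
  have hlow : c0 * (m * (t ^ E - 1)) ≤ ∫ t' in (1:ℝ)..t, J t' := by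
    have h1 : (∫ x in (1:ℝ)..t, c0 * x ^ (-(1/α))) ≤ ∫ t' in (1:ℝ)..t, J t' := by
      apply intervalIntegral.integral_mono_on ht1 ((hIR t).const_mul c0) hint1t
      intro x hx
      exact hL x hx.1
    rwa [intervalIntegral.integral_const_mul, hintval t ht1] at h1
  have hup : (∫ t' in (1:ℝ)..t, J t') ≤ C0 * (m * (t ^ E - 1)) := by
    have h1 : (∫ t' in (1:ℝ)..t, J t') ≤ ∫ x in (1:ℝ)..t, C0 * x ^ (-(1/α)) := by
      apply intervalIntegral.integral_mono_on ht1 hint1t ((hIR t).const_mul C0)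
      intro x hx
      exact hU x hx.1
    rwa [intervalIntegral.integral_const_mul, hintval t ht1] at h1
  have htE0 : (0:ℝ) ≤ t ^ E := by linarith
  constructor
  · rw [hFsplit]
    have hkey : 0 ≤ c0 * m * (t ^ E - 2) :=
      mul_nonneg (mul_pos hc00 hm0).le (by linarith)
    linarith [hlow, h01nn]
  · rw [hFsplit]
    have hkey1 : 0 ≤ C0 * m := mul_nonneg hC00 hm0.le
    have hkey2 : 0 ≤ (c0 * m / 2) * t ^ E :=
      mul_nonneg (by positivity) htE0
    linarith [hup, h01le, htE1]
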